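/- Self-consistency of the TOAD rejection set: at every stage t, every index i in the TOAD rejection set R_t satisfies P_i ≤ α·β(max(1,|R_t|))·A_i. -/
import Mathlib


open Finset Classical

/-- The set of "active" hypothesis indices at stage `t` (indices `i ≤ t`
whose deadline `d i` has not yet passed). -/
noncomputable def toadC (d : ℕ → ℕ) (t : ℕ) : Finset ℕ :=
  (Finset.Icc 1 t).filter (fun i => t ≤ d i)

/-- The TOAD rejection set at each stage: save old rejections
`Rold = R_{t-1} \ C_t`, take the step-up index
`s = max{j ≤ |C_t| : j ≤ #{i ∈ C_t : P_i ≤ α·β(j+|Rold|)·A_i}}`, and reject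
`Rold ∪ {i ∈ C_t : P_i ≤ α·β(s+|Rold|)·A_i}` (the condition
`P_i ≤ thr·A_i` encodes `W_i = P_i/A_i ≤ thr`, with `W_i = ∞` when `A_i = 0`
since p-values are strictly positive). -/
noncomputable def toadR (d : ℕ → ℕ) (A P : ℕ → ℝ) (α : ℝ) (β : ℕ → ℝ) : ℕ → Finset ℕ
  | 0 => ∅
  | t + 1 =>
    let C := toadC d (t + 1)
    let Rold := toadR d A P α β t \ C
    let s := Nat.findGreatest
      (fun j => j ≤ (C.filter (fun i => P i ≤ α * β (j + Rold.card) * A i)).card) C.card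
    Rold ∪ C.filter (fun i => P i ≤ α * β (s + Rold.card) * A i)

/-- Self-consistency of the TOAD rejection set: at every stage `t`, every
index `i ∈ R_t` satisfies `P_i ≤ α·β(max(1,|R_t|))·A_i`. -/
theorem toad_self_consistent
    (d : ℕ → ℕ) (hd : ∀ i, i ≤ d i)
    (A : ℕ → ℝ) (hA : ∀ i, 0 ≤ A i)
    (P : ℕ → ℝ) (hP : ∀ i, 0 < P i)
    (α : ℝ) (hα : α ∈ Set.Ioo (0 : ℝ) 1)
    (β : ℕ → ℝ) (hβ : Monotone β) (hβ0 : β 0 = 0) :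
    ∀ t : ℕ, ∀ i ∈ toadR d A P α β t,
      P i ≤ α * β (max 1 (toadR d A P α β t).card) * A i := by
  intro t
  induction t with
  | zero => intro i hi; simp [toadR] at hi
  | succ t ih =>
    set C := toadC d (t + 1) with hC
    set Rt := toadR d A P α β t with hRt
    set Rold := Rt \ C with hRold
    set s := Nat.findGreatest
      (fun j => j ≤ (C.filter (fun i => P i ≤ α * β (j + Rold.card) * A i)).card) C.card
      with hs
    have hRdef : toadR d A P α β (t + 1)
        = Rold ∪ C.filter (fun i => P i ≤ α * β (s + Rold.card) * A i) := rfl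
    -- monotonicity of the filters
    have hfmono : ∀ j k : ℕ, j ≤ k →
        C.filter (fun i => P i ≤ α * β (j + Rold.card) * A i)
          ⊆ C.filter (fun i => P i ≤ α * β (k + Rold.card) * A i) := by
      intro j k hjk
      intro i hi
      rcases Finset.mem_filter.1 hi with ⟨hiC, hle⟩
      refine Finset.mem_filter.2 ⟨hiC, le_trans hle ?_⟩
      exact mul_le_mul_of_nonneg_right
        (mul_le_mul_of_nonneg_left (hβ (by omega)) hα.1.le) (hA i)
    set m := (Rt ∩ C).card with hm
    -- old rejections that are still active satisfy the threshold at level m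
    have hsub_m : Rt ∩ C ⊆ C.filter (fun i => P i ≤ α * β (m + Rold.card) * A i) := by
      intro i hi
      have him : 0 < m := Finset.card_pos.2 ⟨i, hi⟩
      have hiRt : i ∈ Rt := (Finset.mem_inter.1 hi).1
      have hcard : Rt.card = Rold.card + m := by
        rw [hRold, hm, add_comm]
        exact (Finset.card_inter_add_card_sdiff Rt C).symm ▸
          (by rw [← Finset.card_sdiff_add_card_inter Rt C, add_comm])
      have hb := ih i hiRt
      have hmax : max 1 Rt.card = m + Rold.card := by omega
      rw [hmax] at hb
      exact Finset.mem_filter.2 ⟨(Finset.mem_inter.1 hi).2, hb⟩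
    have hm_le_s : m ≤ s := by
      apply Nat.le_findGreatest
      · exact Finset.card_le_card (Finset.inter_subset_right)
      · exact le_trans (Finset.card_le_card hsub_m) le_rfl |>.trans_eq rfl |>.trans le_rfl
        |>.trans (le_refl _) |>.trans le_rfl
    have hsub_s : Rt ∩ C ⊆ C.filter (fun i => P i ≤ α * β (s + Rold.card) * A i) :=
      hsub_m.trans (hfmono m s hm_le_s)
    have hRt_sub : Rt ⊆ toadR d A P α β (t + 1) := by
      rw [hRdef]
      intro i hi
      by_cases hic : i ∈ C
      · exact Finset.mem_union_right _ (hsub_s (Finset.mem_inter.2 ⟨hi, hic⟩))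
      · exact Finset.mem_union_left _ (Finset.mem_sdiff.2 ⟨hi, hic⟩)
    have hdisj : Disjoint Rold (C.filter (fun i => P i ≤ α * β (s + Rold.card) * A i)) := by
      refine Finset.disjoint_left.2 fun i hi hif => ?_
      exact (Finset.mem_sdiff.1 hi).2 (Finset.mem_filter.1 hif).1
    have hcardR : (toadR d A P α β (t + 1)).card
        = Rold.card + (C.filter (fun i => P i ≤ α * β (s + Rold.card) * A i)).card := by
      rw [hRdef, Finset.card_union_of_disjoint hdisj]
    have hs_spec : s ≤ (C.filter (fun i => P i ≤ α * β (s + Rold.card) * A i)).card := by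
      rcases Nat.eq_zero_or_pos s with h0 | hpos
      · omega
      · have := (Nat.findGreatest_eq_iff.1 (hs.symm)).2.1 (by omega)
        exact this
    intro i hi
    rw [hRdef] at hi
    rcases Finset.mem_union.1 hi with hi | hi
    · have hiRt : i ∈ Rt := (Finset.mem_sdiff.1 hi).1
      have hb := ih i hiRt
      refine le_trans hb ?_
      refine mul_le_mul_of_nonneg_right
        (mul_le_mul_of_nonneg_left (hβ ?_) hα.1.le) (hA i)
      exact max_le_max le_rfl (Finset.card_le_card hRt_sub)
    · have hbf := (Finset.mem_filter.1 hi).2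
      refine le_trans hbf ?_
      refine mul_le_mul_of_nonneg_right
        (mul_le_mul_of_nonneg_left (hβ ?_) hα.1.le) (hA i)
      have hpos : 0 < (toadR d A P α β (t + 1)).card :=
        Finset.card_pos.2 ⟨i, by rw [hRdef]; exact Finset.mem_union_right _ hi⟩
      omega
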